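/- For θ ∈ (0,1), the function f(x) = h(θ)·p(x)·(1−θ)^x on ℕ is a probability mass function: f(x) ≥ 0 for all x ∈ ℕ and ∑_{x=0}^∞ f(x) = 1. -/

import Mathlib

open scoped BigOperators

/-- `p x = ∑_{k=1}^r a_{k-1} (k-1)! C(x+k-1, x)` (index shifted: `k ∈ range r` stands for `k-1`). -/
noncomputable def p (r : ℕ) (a : ℕ → ℝ) (x : ℕ) : ℝ :=
  ∑ k ∈ Finset.range r, a k * (Nat.factorial k : ℝ) * (Nat.choose (x + k) x : ℝ)

/-- `h θ = 1 / ∑_{k=1}^r a_{k-1} (k-1)! / θ^k` (index shifted). -/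
noncomputable def h (r : ℕ) (a : ℕ → ℝ) (θ : ℝ) : ℝ :=
  1 / ∑ k ∈ Finset.range r, a k * (Nat.factorial k : ℝ) / θ ^ (k + 1)

/-- `A n t = ∑_{y₁+⋯+y_r = n} (n!/(y₁!⋯y_r!)) (∏_{k=1}^r (a_{k-1}(k-1)!)^{y_k})
    C(t + ∑_{k=1}^r k y_k − 1, t)`. -/
noncomputable def A (r : ℕ) (a : ℕ → ℝ) (n t : ℕ) : ℝ :=
  ∑ y ∈ Finset.Nat.antidiagonalTuple r n,
    ((Nat.factorial n : ℝ) / ∏ k : Fin r, (Nat.factorial (y k) : ℝ)) *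
      (∏ k : Fin r, (a (k : ℕ) * (Nat.factorial (k : ℕ) : ℝ)) ^ (y k)) *
      (Nat.choose (t + (∑ k : Fin r, ((k : ℕ) + 1) * y k) - 1) t : ℝ)

/-- For `θ ∈ (0,1)`, `f(x) = h(θ) p(x) (1−θ)^x` is a probability mass
function on ℕ: it is nonnegative and sums to one. -/
theorem ndoppe_is_pmf (r : ℕ) (hr : 1 ≤ r) (a : ℕ → ℝ) (ha : ∀ k, 0 ≤ a k)
    (hne : ∃ k, k < r ∧ a k ≠ 0) (θ : ℝ) (hθ : θ ∈ Set.Ioo (0 : ℝ) 1) :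
    (∀ x : ℕ, 0 ≤ h r a θ * p r a x * (1 - θ) ^ x) ∧
      HasSum (fun x : ℕ => h r a θ * p r a x * (1 - θ) ^ x) 1 := by
  obtain ⟨hθ0, hθ1⟩ := hθ
  obtain ⟨k0, hk0, hak0⟩ := hne
  have h1θ : (0:ℝ) ≤ 1 - θ := by linarith
  have hS : 0 < ∑ k ∈ Finset.range r, a k * (Nat.factorial k : ℝ) / θ ^ (k + 1) := by
    apply Finset.sum_pos' (fun k _ =>
      div_nonneg (mul_nonneg (ha k) (Nat.cast_nonneg _)) (by positivity))
    refine ⟨k0, Finset.mem_range.2 hk0, ?_⟩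
    have h1 : 0 < a k0 := (ha k0).lt_of_ne' hak0
    have h2 : (0:ℝ) < Nat.factorial k0 := by positivity
    positivity
  have hh : 0 ≤ h r a θ := by
    rw [h]; positivity
  constructor
  · intro x
    have hp : 0 ≤ p r a x := Finset.sum_nonneg fun k _ =>
      mul_nonneg (mul_nonneg (ha k) (Nat.cast_nonneg _)) (Nat.cast_nonneg _)
    positivity
  · have key : ∀ k ∈ Finset.range r, HasSum
        (fun x : ℕ => a k * (Nat.factorial k : ℝ) * (Nat.choose (x + k) x : ℝ) * (1 - θ) ^ x)
        (a k * (Nat.factorial k : ℝ) / θ ^ (k + 1)) := by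
      intro k _
      have hnorm : ‖1 - θ‖ < 1 := by
        rw [Real.norm_eq_abs, abs_of_nonneg h1θ]; linarith
      have H := (hasSum_choose_mul_geometric_of_norm_lt_one (𝕜 := ℝ) k hnorm).mul_left
        (a k * (Nat.factorial k : ℝ))
      have e1 : (1 : ℝ) - (1 - θ) = θ := by ring
      rw [e1, mul_one_div] at H
      convert H using 2 with x
      · rfl
      have e := Nat.choose_symm (Nat.le_add_left k x)
      rw [Nat.add_sub_cancel] at e
      rw [e]; ring
    have Hsum : HasSum (fun x : ℕ => p r a x * (1 - θ) ^ x)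
        (∑ k ∈ Finset.range r, a k * (Nat.factorial k : ℝ) / θ ^ (k + 1)) := by
      have := hasSum_sum (f := fun k (x : ℕ) =>
        a k * (Nat.factorial k : ℝ) * (Nat.choose (x + k) x : ℝ) * (1 - θ) ^ x)
        (s := Finset.range r) key
      convert this using 2 with x
      rw [p, Finset.sum_mul]
    have := Hsum.mul_left (h r a θ)
    rw [h, one_div, inv_mul_cancel₀ hS.ne'] at this
    convert this using 2 with x
    · rfl
    rw [h]; ring
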